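/- Let W : X^n → Q be an (ε, δ)-max-KL stable algorithm outputting statistical queries q : X → [0,1]. Let P be a distribution on X and let S = (x_1, ..., x_n) be n i.i.d. samples from P. Then |E[q(P) | q = W(S)] − E[q(S) | q = W(S)]| ≤ e^ε − 1 + δ, where q(P) = E_{z∼P}[q(z)] and q(S) = (1/n)Σ_i q(x_i), and the expectation is over S and the internal randomness of W. -/

import Mathlib

open MeasureTheory

/-- Two datasets in `X^n` are neighboring if they differ in at most one coordinate. -/
def Neighboring {X : Type*} {n : ℕ} (x x' : Fin n → X) : Prop :=
  ∃ i : Fin n, ∀ j : Fin n, j ≠ i → x j = x' j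

section Aux

variable {Q : Type*} [MeasurableSpace Q]

lemma aux_toReal_le_one (ρ : Measure Q) [IsProbabilityMeasure ρ] (A : Set Q) :
    (ρ A).toReal ≤ 1 := by
  have h := prob_le_one (μ := ρ) (s := A)
  simpa using ENNReal.toReal_mono ENNReal.one_ne_top h

lemma aux_integrable_of_Icc {α : Type*} [MeasurableSpace α] (ρ : Measure α) [IsFiniteMeasure ρ]
    {f : α → ℝ} (hf : AEStronglyMeasurable f ρ) (h01 : ∀ a, f a ∈ Set.Icc (0 : ℝ) 1) :
    Integrable f ρ :=
  (integrable_const (1 : ℝ)).mono' hf (Filter.Eventually.of_forall fun a => by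
    rw [Real.norm_eq_abs, abs_of_nonneg (h01 a).1]; exact (h01 a).2)

lemma aux_integral_mem_Icc {α : Type*} [MeasurableSpace α] (ρ : Measure α)
    [IsProbabilityMeasure ρ] {f : α → ℝ} (hf : AEStronglyMeasurable f ρ)
    (h01 : ∀ a, f a ∈ Set.Icc (0 : ℝ) 1) :
    (∫ a, f a ∂ρ) ∈ Set.Icc (0 : ℝ) 1 := by
  constructor
  · exact integral_nonneg fun a => (h01 a).1
  · calc ∫ a, f a ∂ρ ≤ ∫ _, (1 : ℝ) ∂ρ :=
          integral_mono (aux_integrable_of_Icc ρ hf h01) (integrable_const 1) fun a => (h01 a).2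
      _ = 1 := by simp

lemma aux_integral_le (μ ν : Measure Q) [IsProbabilityMeasure μ] [IsProbabilityMeasure ν]
    {h : Q → ℝ} (hm : Measurable h) (h01 : ∀ q, h q ∈ Set.Icc (0 : ℝ) 1)
    {ε δ : ℝ} (hδ : 0 ≤ δ)
    (hcomp : ∀ A : Set Q, MeasurableSet A → (ν A).toReal ≤ Real.exp ε * (μ A).toReal + δ) :
    ∫ q, h q ∂ν ≤ Real.exp ε * ∫ q, h q ∂μ + δ := by
  have hb : ∀ (ρ : Measure Q) [IsProbabilityMeasure ρ], Integrable h ρ := fun ρ _ =>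
    aux_integrable_of_Icc ρ hm.aestronglyMeasurable h01
  have hnn : ∀ ρ : Measure Q, (0 : Q → ℝ) ≤ᵐ[ρ] h := fun ρ =>
    Filter.Eventually.of_forall fun q => (h01 q).1
  have hle1 : ∀ ρ : Measure Q, h ≤ᵐ[ρ] fun _ => (1 : ℝ) := fun ρ =>
    Filter.Eventually.of_forall fun q => (h01 q).2
  have hmono : ∀ ρ : Measure Q, Measurable fun t : ℝ => (ρ {q | t ≤ h q}).toReal := by
    intro ρ
    refine Measurable.ennreal_toReal (Antitone.measurable fun a b hab => ?_)
    exact measure_mono fun q hq => le_trans hab hq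
  have hintg : ∀ (ρ : Measure Q) [IsProbabilityMeasure ρ],
      IntegrableOn (fun t : ℝ => (ρ {q | t ≤ h q}).toReal) (Set.Ioc 0 1) := by
    intro ρ _
    refine ((integrableOn_const_iff (C := (1 : ℝ))).2 (Or.inr measure_Ioc_lt_top)).mono'
      (hmono ρ).aestronglyMeasurable ?_
    refine Filter.Eventually.of_forall fun t => ?_
    rw [Real.norm_eq_abs, abs_of_nonneg ENNReal.toReal_nonneg]
    exact aux_toReal_le_one ρ _
  rw [(hb ν).integral_eq_integral_Ioc_meas_le (hnn ν) (hle1 ν),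
      (hb μ).integral_eq_integral_Ioc_meas_le (hnn μ) (hle1 μ)]
  have hstep : ∫ t in Set.Ioc (0:ℝ) 1, (ν {q | t ≤ h q}).toReal
      ≤ ∫ t in Set.Ioc (0:ℝ) 1, (Real.exp ε * (μ {q | t ≤ h q}).toReal + δ) := by
    refine setIntegral_mono_on (hintg ν) ?_ measurableSet_Ioc fun t _ => ?_
    · exact ((hintg μ).const_mul _).add ((integrableOn_const_iff (C := δ)).2 (Or.inr measure_Ioc_lt_top))
    · exact hcomp _ (hm measurableSet_Ici)
  refine hstep.trans ?_
  rw [integral_add ((hintg μ).const_mul _) ((integrableOn_const_iff (C := δ)).2 (Or.inr measure_Ioc_lt_top)),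
      integral_const_mul, integral_const]
  simp [Real.volume_Ioc]
  exact le_rfl

lemma aux_abs_le (μ ν : Measure Q) [IsProbabilityMeasure μ] [IsProbabilityMeasure ν]
    {h : Q → ℝ} (hm : Measurable h) (h01 : ∀ q, h q ∈ Set.Icc (0 : ℝ) 1)
    {ε δ : ℝ} (hε : 0 ≤ ε) (hδ : 0 ≤ δ)
    (hc1 : ∀ A : Set Q, MeasurableSet A → (ν A).toReal ≤ Real.exp ε * (μ A).toReal + δ)
    (hc2 : ∀ A : Set Q, MeasurableSet A → (μ A).toReal ≤ Real.exp ε * (ν A).toReal + δ) :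
    |(∫ q, h q ∂ν) - ∫ q, h q ∂μ| ≤ Real.exp ε - 1 + δ := by
  have h1 := aux_integral_le μ ν hm h01 hδ hc1
  have h2 := aux_integral_le ν μ hm h01 hδ hc2
  have hμ01 := aux_integral_mem_Icc μ hm.aestronglyMeasurable h01
  have hν01 := aux_integral_mem_Icc ν hm.aestronglyMeasurable h01
  have hexp : 1 ≤ Real.exp ε := Real.one_le_exp hε
  rw [abs_sub_le_iff]
  constructor <;> nlinarith [hμ01.1, hμ01.2, hν01.1, hν01.2]

end Aux

open ProbabilityTheory

/-- Single-sample de-correlated expectation lemma for statistical queries: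
if `W` is an (ε,δ)-max-KL stable algorithm outputting statistical queries
(`eval q : X → [0,1]`), and `S ∼ Pⁿ`, then the expected population value and
the expected empirical value of the output query differ by at most `e^ε − 1 + δ`. -/
theorem single_sample_decorrelated_expectation_SQ
    {X Q : Type*} [MeasurableSpace X] [MeasurableSpace Q] {n : ℕ} (hn : 0 < n)
    (P : Measure X) [IsProbabilityMeasure P]
    (W : (Fin n → X) → Measure Q) (hWprob : ∀ s, IsProbabilityMeasure (W s))
    (hWmeas : Measurable W)
    (eval : Q → X → ℝ) (hmeas : Measurable fun p : Q × X => eval p.1 p.2)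
    (hrange : ∀ q z, eval q z ∈ Set.Icc (0 : ℝ) 1)
    (ε δ : ℝ) (hε : 0 ≤ ε) (hδ : 0 ≤ δ)
    (hstable : ∀ s s' : Fin n → X, Neighboring s s' → ∀ S : Set Q, MeasurableSet S →
      ((W s) S).toReal ≤ Real.exp ε * ((W s') S).toReal + δ) :
    |(∫ s, ∫ q, (∫ z, eval q z ∂P) ∂(W s) ∂(Measure.pi fun _ : Fin n => P)) -
      (∫ s, ∫ q, ((n : ℝ)⁻¹ * ∑ i : Fin n, eval q (s i)) ∂(W s)
        ∂(Measure.pi fun _ : Fin n => P))| ≤ Real.exp ε - 1 + δ := by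
  set μ : Measure (Fin n → X) := Measure.pi fun _ : Fin n => P with hμdef
  set K : ℝ := Real.exp ε - 1 + δ with hKdef
  have hK0 : 0 ≤ K := by
    have := Real.one_le_exp hε; simp only [hKdef]; linarith
  let κ : Kernel (Fin n → X) Q := ⟨W, hWmeas⟩
  haveI : IsMarkovKernel κ := ⟨hWprob⟩
  have hκ : ∀ s, κ s = W s := fun s => rfl
  -- basic measurability / boundedness
  have hevalx : ∀ x : X, Measurable fun q => eval q x := fun x =>
    hmeas.comp (measurable_id.prodMk measurable_const)
  set G : Q → ℝ := fun q => ∫ z, eval q z ∂P with hGdef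
  have hGsm : StronglyMeasurable G :=
    hmeas.stronglyMeasurable.integral_prod_right'
  have hG01 : ∀ q, G q ∈ Set.Icc (0 : ℝ) 1 := fun q =>
    aux_integral_mem_Icc P (hmeas.comp (measurable_const.prodMk measurable_id)
      : Measurable fun z => eval q z).aestronglyMeasurable (hrange q)
  set B : ℝ := ∫ s, ∫ q, G q ∂(W s) ∂μ with hBdef
  set A : Fin n → ℝ := fun i => ∫ s, ∫ q, eval q (s i) ∂(W s) ∂μ with hAdef
  -- measurability and integrability of the A-integrands
  have hAi_sm : ∀ i : Fin n, StronglyMeasurable fun s => ∫ q, eval q (s i) ∂(W s) := by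
    intro i
    have hf : StronglyMeasurable fun p : (Fin n → X) × Q => eval p.2 (p.1 i) :=
      (hmeas.comp (measurable_snd.prodMk ((measurable_pi_apply i).comp
        measurable_fst))).stronglyMeasurable
    exact hf.integral_kernel_prod_right' (κ := κ)
  have hAi_01 : ∀ (i : Fin n) (s : Fin n → X),
      (∫ q, eval q (s i) ∂(W s)) ∈ Set.Icc (0 : ℝ) 1 := by
    intro i s
    haveI := hWprob s
    exact aux_integral_mem_Icc (W s) (hevalx (s i)).aestronglyMeasurable
      fun q => hrange q (s i)
  have hAi_int : ∀ i : Fin n, Integrable (fun s => ∫ q, eval q (s i) ∂(W s)) μ := fun i =>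
    aux_integrable_of_Icc μ (hAi_sm i).aestronglyMeasurable (hAi_01 i)
  -- Step C1: the empirical side splits into the A i
  have hC1 : (∫ s, ∫ q, ((n : ℝ)⁻¹ * ∑ i : Fin n, eval q (s i)) ∂(W s) ∂μ)
      = (n : ℝ)⁻¹ * ∑ i : Fin n, A i := by
    have hinner : ∀ s : Fin n → X, ∫ q, ((n : ℝ)⁻¹ * ∑ i : Fin n, eval q (s i)) ∂(W s)
        = (n : ℝ)⁻¹ * ∑ i : Fin n, ∫ q, eval q (s i) ∂(W s) := by
      intro s
      haveI := hWprob s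
      rw [integral_const_mul, integral_finset_sum]
      intro i _
      exact aux_integrable_of_Icc (W s) (hevalx (s i)).aestronglyMeasurable
        fun q => hrange q (s i)
    simp only [hinner]
    rw [integral_const_mul, integral_finset_sum _ fun i _ => hAi_int i]
  -- per-coordinate key bound
  haveI hμprob : IsProbabilityMeasure μ := by rw [hμdef]; infer_instance
  have hn' : (n : ℝ) ≠ 0 := Nat.cast_ne_zero.mpr hn.ne'
  have key : ∀ i : Fin n, |B - A i| ≤ K := by
    intro i
    set φ : (Fin n → X) × X × X → ℝ :=
      fun p => ∫ q, eval q p.2.2 ∂(W (Function.update p.1 i p.2.1)) with hφdef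
    have hupd : Measurable fun p : (Fin n → X) × X × X => Function.update p.1 i p.2.1 :=
      measurable_update'.comp (measurable_fst.prodMk measurable_snd.fst)
    have hφsm : StronglyMeasurable φ := by
      have hf : StronglyMeasurable fun r : ((Fin n → X) × X × X) × Q => eval r.2 r.1.2.2 :=
        (hmeas.comp (measurable_snd.prodMk measurable_fst.snd.snd)).stronglyMeasurable
      exact hf.integral_kernel_prod_right' (κ := κ.comap _ hupd)
    have hφ01 : ∀ p, φ p ∈ Set.Icc (0 : ℝ) 1 := by
      intro p
      haveI := hWprob (Function.update p.1 i p.2.1)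
      exact aux_integral_mem_Icc _ (hevalx p.2.2).aestronglyMeasurable fun q => hrange q p.2.2
    -- resampling identity
    have step1 : ∀ f : (Fin n → X) → ℝ, Measurable f → (∀ s, f s ∈ Set.Icc (0 : ℝ) 1) →
        ∫ s, f s ∂μ = ∫ s, ∫ x, f (Function.update s i x) ∂P ∂μ := by
      intro f hf hf01
      have hT : Measurable fun p : (Fin n → X) × X => Function.update p.1 i p.2 :=
        measurable_update'
      have hmap : Measure.map (fun p : (Fin n → X) × X => Function.update p.1 i p.2)
          (μ.prod P) = μ := by
        rw [hμdef]
        refine (Measure.pi_eq fun A hA => ?_).symm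
        rw [Measure.map_apply hT (MeasurableSet.univ_pi hA)]
        have hset : (fun p : (Fin n → X) × X => Function.update p.1 i p.2) ⁻¹'
            (Set.pi Set.univ A)
            = (Set.pi Set.univ (Function.update A i Set.univ)) ×ˢ A i := by
          ext ⟨s, x⟩
          simp only [Set.mem_preimage, Set.mem_pi, Set.mem_univ, true_implies, Set.mem_prod]
          constructor
          · intro hsx
            refine ⟨fun j => ?_, by simpa using hsx i⟩
            by_cases hj : j = i
            · subst hj; simp
            · simpa [Function.update_of_ne hj] using hsx j
          · rintro ⟨h1, h2⟩ j
            by_cases hj : j = i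
            · subst hj; simpa
            · have := h1 j; simpa [Function.update_of_ne hj] using this
        rw [hset, Measure.prod_prod, Measure.pi_pi]
        simp only [Function.apply_update (fun _ s => P s) A i Set.univ]
        rw [Finset.prod_update_of_mem (Finset.mem_univ i)]
        simp only [measure_univ, one_mul]
        rw [Finset.prod_eq_mul_prod_sdiff_singleton_of_mem (Finset.mem_univ i) fun j => P (A j),
          mul_comm]
      have hint : Integrable (fun p : (Fin n → X) × X => f (Function.update p.1 i p.2))
          (μ.prod P) :=
        aux_integrable_of_Icc _ ((hf.comp hT).aestronglyMeasurable) fun p => hf01 _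
      calc ∫ s, f s ∂μ
          = ∫ p, f (Function.update p.1 i p.2) ∂(μ.prod P) := by
            conv_lhs => rw [← hmap]
            exact integral_map hT.aemeasurable hf.aestronglyMeasurable
        _ = ∫ s, ∫ x, f (Function.update s i x) ∂P ∂μ :=
            integral_prod (fun p : (Fin n → X) × X => f (Function.update p.1 i p.2)) hint
    -- measurability of the B-integrand
    have hBsm : StronglyMeasurable fun s : Fin n → X => ∫ q, G q ∂(W s) := by
      have hf : StronglyMeasurable fun p : (Fin n → X) × Q => G p.2 :=
        hGsm.comp_measurable measurable_snd
      exact hf.integral_kernel_prod_right' (κ := κ)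
    have hB01 : ∀ s, (∫ q, G q ∂(W s)) ∈ Set.Icc (0 : ℝ) 1 := by
      intro s
      haveI := hWprob s
      exact aux_integral_mem_Icc _ hGsm.aestronglyMeasurable hG01
    -- Fubini between the query and a fresh sample
    have hswapG : ∀ s' : Fin n → X, ∫ q, G q ∂(W s') = ∫ z, ∫ q, eval q z ∂(W s') ∂P := by
      intro s'
      haveI := hWprob s'
      have hint : Integrable (Function.uncurry eval) ((W s').prod P) :=
        aux_integrable_of_Icc _ hmeas.aestronglyMeasurable fun p => hrange p.1 p.2
      exact integral_integral_swap hint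
    -- rewrite A i
    have hA_eq : A i = ∫ s, ∫ x, φ (s, x, x) ∂P ∂μ := by
      show (∫ s, ∫ q, eval q (s i) ∂(W s) ∂μ) = _
      rw [step1 _ (hAi_sm i).measurable (hAi_01 i)]
      simp only [Function.update_self]
      rfl
    -- rewrite B
    have hB_eq : B = ∫ s, ∫ x, ∫ z, φ (s, z, x) ∂P ∂P ∂μ := by
      show (∫ s, ∫ q, G q ∂(W s) ∂μ) = _
      rw [step1 _ hBsm.measurable hB01]
      have h1 : ∀ (s : Fin n → X) (x : X),
          (∫ q, G q ∂(W (Function.update s i x))) = ∫ z, φ (s, x, z) ∂P := fun s x =>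
        hswapG (Function.update s i x)
      simp only [h1]
      have h2 : ∀ s : Fin n → X,
          (∫ x, ∫ z, φ (s, x, z) ∂P ∂P) = ∫ x, ∫ z, φ (s, z, x) ∂P ∂P := by
        intro s
        have hint : Integrable (Function.uncurry fun x z => φ (s, x, z)) (P.prod P) :=
          aux_integrable_of_Icc _ ((hφsm.comp_measurable
            (measurable_const.prodMk
              (measurable_fst.prodMk measurable_snd))).aestronglyMeasurable)
            fun p => hφ01 _
        exact integral_integral_swap hint
      simp only [h2]
    -- pointwise stability bound
    have hneighbor : ∀ (s : Fin n → X) (x z : X),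
        Neighboring (Function.update s i z) (Function.update s i x) := fun s x z =>
      ⟨i, fun j hj => by rw [Function.update_of_ne hj, Function.update_of_ne hj]⟩
    have hpt : ∀ (s : Fin n → X) (x z : X), |φ (s, z, x) - φ (s, x, x)| ≤ K := by
      intro s x z
      haveI := hWprob (Function.update s i z)
      haveI := hWprob (Function.update s i x)
      exact aux_abs_le (W (Function.update s i x)) (W (Function.update s i z))
        (hevalx x) (fun q => hrange q x) hε hδ
        (fun A hA => hstable _ _ (hneighbor s x z) A hA)
        (fun A hA => hstable _ _ (hneighbor s z x) A hA)
    -- integrability bookkeeping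
    have hf1sm : StronglyMeasurable fun p : (Fin n → X) × X => ∫ z, φ (p.1, z, p.2) ∂P := by
      have hg : StronglyMeasurable fun r : ((Fin n → X) × X) × X => φ (r.1.1, r.2, r.1.2) :=
        hφsm.comp_measurable (measurable_fst.fst.prodMk
          (measurable_snd.prodMk measurable_fst.snd))
      exact hg.integral_prod_right'
    have hf101 : ∀ p : (Fin n → X) × X, (∫ z, φ (p.1, z, p.2) ∂P) ∈ Set.Icc (0 : ℝ) 1 :=
      fun p => aux_integral_mem_Icc P ((hφsm.comp_measurable (measurable_const.prodMk
        (measurable_id.prodMk measurable_const))).aestronglyMeasurable) fun z => hφ01 _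
    have hxxsm : StronglyMeasurable fun p : (Fin n → X) × X => φ (p.1, p.2, p.2) :=
      hφsm.comp_measurable (measurable_fst.prodMk (measurable_snd.prodMk measurable_snd))
    have t1int : ∀ s : Fin n → X, Integrable (fun x => ∫ z, φ (s, z, x) ∂P) P := fun s =>
      aux_integrable_of_Icc P ((hf1sm.comp_measurable
        (measurable_const.prodMk measurable_id)).aestronglyMeasurable) fun x => hf101 (s, x)
    have t2int : ∀ s : Fin n → X, Integrable (fun x => φ (s, x, x)) P := fun s =>
      aux_integrable_of_Icc P ((hφsm.comp_measurable (measurable_const.prodMk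
        (measurable_id.prodMk measurable_id))).aestronglyMeasurable) fun x => hφ01 _
    have t3int : ∀ (s : Fin n → X) (x : X), Integrable (fun z => φ (s, z, x)) P := fun s x =>
      aux_integrable_of_Icc P ((hφsm.comp_measurable (measurable_const.prodMk
        (measurable_id.prodMk measurable_const))).aestronglyMeasurable) fun z => hφ01 _
    have hF1int : Integrable (fun s => ∫ x, ∫ z, φ (s, z, x) ∂P ∂P) μ :=
      aux_integrable_of_Icc μ (hf1sm.integral_prod_right').aestronglyMeasurable fun s =>
        aux_integral_mem_Icc P ((hf1sm.comp_measurable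
          (measurable_const.prodMk measurable_id)).aestronglyMeasurable)
          fun x => hf101 (s, x)
    have hF2int : Integrable (fun s => ∫ x, φ (s, x, x) ∂P) μ :=
      aux_integrable_of_Icc μ (hxxsm.integral_prod_right').aestronglyMeasurable fun s =>
        aux_integral_mem_Icc P ((hφsm.comp_measurable (measurable_const.prodMk
          (measurable_id.prodMk measurable_id))).aestronglyMeasurable) fun x => hφ01 _
    -- inner bound
    have hbound : ∀ s : Fin n → X,
        ‖(∫ x, ∫ z, φ (s, z, x) ∂P ∂P) - ∫ x, φ (s, x, x) ∂P‖ ≤ K := by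
      intro s
      have hpt2 : ∀ x : X, ‖(∫ z, φ (s, z, x) ∂P) - φ (s, x, x)‖ ≤ K := by
        intro x
        have hc : φ (s, x, x) = ∫ _z, φ (s, x, x) ∂P := by simp
        rw [hc, ← integral_sub (t3int s x) (integrable_const _)]
        calc ‖∫ z, (φ (s, z, x) - φ (s, x, x)) ∂P‖ ≤ K * (P Set.univ).toReal :=
              norm_integral_le_of_norm_le_const (Filter.Eventually.of_forall fun z => by
                rw [Real.norm_eq_abs]; exact hpt s x z)
          _ = K := by simp
      rw [← integral_sub (t1int s) (t2int s)]
      calc ‖∫ x, ((∫ z, φ (s, z, x) ∂P) - φ (s, x, x)) ∂P‖ ≤ K * (P Set.univ).toReal :=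
            norm_integral_le_of_norm_le_const (Filter.Eventually.of_forall hpt2)
        _ = K := by simp
    rw [hB_eq, hA_eq, ← integral_sub hF1int hF2int, ← Real.norm_eq_abs]
    calc ‖∫ s, ((∫ x, ∫ z, φ (s, z, x) ∂P ∂P) - ∫ x, φ (s, x, x) ∂P) ∂μ‖
        ≤ K * (μ Set.univ).toReal :=
          norm_integral_le_of_norm_le_const (Filter.Eventually.of_forall hbound)
      _ = K := by simp
  -- assemble
  have hsum : B - (n : ℝ)⁻¹ * ∑ i : Fin n, A i = (n : ℝ)⁻¹ * ∑ i : Fin n, (B - A i) := by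
    rw [Finset.sum_sub_distrib, mul_sub]
    congr 1
    rw [Finset.sum_const, Finset.card_univ, Fintype.card_fin, nsmul_eq_mul, ← mul_assoc,
      inv_mul_cancel₀ hn', one_mul]
  have hgoal : |B - (n : ℝ)⁻¹ * ∑ i : Fin n, A i| ≤ K := by
    rw [hsum, abs_mul, abs_of_nonneg (by positivity : (0 : ℝ) ≤ (n : ℝ)⁻¹)]
    calc (n : ℝ)⁻¹ * |∑ i : Fin n, (B - A i)|
        ≤ (n : ℝ)⁻¹ * ∑ i : Fin n, |B - A i| :=
          mul_le_mul_of_nonneg_left (Finset.abs_sum_le_sum_abs _ _) (by positivity)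
      _ ≤ (n : ℝ)⁻¹ * ∑ _i : Fin n, K :=
          mul_le_mul_of_nonneg_left (Finset.sum_le_sum fun i _ => key i) (by positivity)
      _ = K := by
          rw [Finset.sum_const, Finset.card_univ, Fintype.card_fin, nsmul_eq_mul, ← mul_assoc,
            inv_mul_cancel₀ hn', one_mul]
  calc |(∫ s, ∫ q, (∫ z, eval q z ∂P) ∂(W s) ∂μ) -
        ∫ s, ∫ q, ((n : ℝ)⁻¹ * ∑ i : Fin n, eval q (s i)) ∂(W s) ∂μ|
      = |B - (n : ℝ)⁻¹ * ∑ i : Fin n, A i| := by rw [hC1]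
    _ ≤ K := hgoal
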